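/- arXiv:1612.05986 — 5 statements merged into one kernel-verified Lean document; each statement's English description precedes it below -/
import Mathlib

section
/- For p ∈ (0,1) with p ≠ 1/2, let δ be a Bernoulli(p) random variable. Then for all real t, E[exp(t(δ−p))] = p·e^{t(1−p)} + (1−p)·e^{−tp} ≤ exp(K(p)²·t²), where K(p) = (1/2)·√((1−2p)/log((1−p)/p)). -/
open MeasureTheory ProbabilityTheory Matrix

noncomputable section

/-- Spectral (operator) norm of a real square matrix. -/
def opNorm {n : ℕ} (A : Matrix (Fin n) (Fin n) ℝ) : ℝ :=
  ‖Matrix.toEuclideanCLM (𝕜 := ℝ) A‖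

/-- The Kearns–Saul sub-Gaussian parameter. -/
def ksK (p : ℝ) : ℝ := (1/2) * Real.sqrt ((1 - 2*p) / Real.log ((1-p)/p))

/-- Eigenvalues of a Hermitian matrix sorted in increasing order. -/
def sortedEigs {m : Type*} [Fintype m] [DecidableEq m] {A : Matrix m m ℝ}
    (hA : A.IsHermitian) : List ℝ :=
  (Finset.univ.val.map hA.eigenvalues).sort (· ≤ ·)

/-- Second smallest eigenvalue of a Hermitian matrix. -/
def lambda2 {m : Type*} [Fintype m] [DecidableEq m] {A : Matrix m m ℝ}
    (hA : A.IsHermitian) : ℝ := (sortedEigs hA).getD 1 0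

/-- Canonical basis vector. -/
def ev {n : ℕ} (i : Fin n) : Fin n → ℝ := Pi.single i 1

/-- Laplacian of the weighted graph with vertex indicators `c`. -/
def lapOf {n : ℕ} (w : Fin n → Fin n → ℝ) (c : Fin n → ℝ) : Matrix (Fin n) (Fin n) ℝ :=
  ∑ i : Fin n, ∑ j : Fin n,
    if i < j then (c i * c j * w i j) • Matrix.vecMulVec (ev i - ev j) (ev i - ev j) else 0

/-- Augmented Laplacian. -/
def augLap {n : ℕ} (w : Fin n → Fin n → ℝ) (α : ℝ) (c : Fin n → ℝ) :
    Matrix (Fin n) (Fin n) ℝ :=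
  lapOf w c + α • Matrix.diagonal (fun i => 1 - c i)

set_option maxHeartbeats 1000000 in
lemma ks_psi_le {p : ℝ} (hp0 : 0 < p) (hp : p < 1/2) (t : ℝ) :
    Real.log (p * Real.exp t + (1 - p)) - p * t
      ≤ (1 - 2*p) / (4 * Real.log ((1-p)/p)) * t ^ 2 := by
  have hp1 : p < 1 := by linarith
  have hq : 0 < 1 - p := by linarith
  set L : ℝ := Real.log ((1-p)/p) with hLdef
  have hL : 0 < L := Real.log_pos (by rw [lt_div_iff₀ hp0]; linarith)
  set c : ℝ := (1 - 2*p) / (4 * L) with hcdef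
  have hc : 0 < c := div_pos (by linarith) (by linarith)
  have h4cL : 4 * c * L = 1 - 2*p := by
    rw [hcdef]; field_simp
  set D : ℝ → ℝ := fun t => p * Real.exp t + (1 - p) with hDdef
  have hD : ∀ t, 0 < D t := fun t => by
    have := Real.exp_pos t; positivity
  set φ : ℝ → ℝ := fun t => p * Real.exp t / D t with hφdef
  have hφ0 : ∀ t, 0 < φ t := fun t => by
    have := Real.exp_pos t; have := hD t; positivity
  have hφ1 : ∀ t, φ t < 1 := fun t => by
    rw [hφdef, div_lt_one (hD t)]
    simp only [hDdef]; linarith [Real.exp_pos t]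
  have hφmono : Monotone φ := by
    intro s u hsu
    rw [hφdef]
    rw [div_le_div_iff₀ (hD s) (hD u)]
    have h1 : Real.exp s ≤ Real.exp u := Real.exp_le_exp.2 hsu
    have h2 := Real.exp_pos s
    simp only [hDdef]
    nlinarith [mul_le_mul_of_nonneg_left h1 (mul_nonneg hp0.le hq.le)]
  have hexpL : Real.exp L = (1-p)/p := Real.exp_log (by positivity)
  have hφL : φ L = 1/2 := by
    rw [hφdef]; simp only [hDdef, hexpL]
    field_simp
    ring
  have hφ0' : φ 0 = p := by
    rw [hφdef]; simp [hDdef]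
  have hφ2L : φ (2*L) = 1 - p := by
    have h2L : Real.exp (2*L) = ((1-p)/p)^2 := by
      rw [two_mul, Real.exp_add, hexpL]; ring
    rw [hφdef]; simp only [hDdef, h2L]
    field_simp
    ring
  have hD2L : D (2*L) = (1-p)/p := by
    have h2L : Real.exp (2*L) = ((1-p)/p)^2 := by
      rw [two_mul, Real.exp_add, hexpL]; ring
    simp only [hDdef, h2L]
    field_simp
    ring
  -- derivative setup
  set ψ : ℝ → ℝ := fun t => Real.log (D t) - p * t with hψdef
  set g : ℝ → ℝ := fun t => c * t^2 - ψ t with hgdef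
  set G : ℝ → ℝ := fun t => 2*c*t - (φ t - p) with hGdef
  have hDderiv : ∀ t, HasDerivAt D (p * Real.exp t) t := fun t => by
    simpa [hDdef] using ((Real.hasDerivAt_exp t).const_mul p).add_const (1-p)
  have hψderiv : ∀ t, HasDerivAt ψ (φ t - p) t := fun t => by
    have h1 : HasDerivAt (fun t => Real.log (D t)) (p * Real.exp t / D t) t :=
      (hDderiv t).log (hD t).ne'
    exact (h1.sub ((hasDerivAt_id t).const_mul p)).congr_deriv (by simp [hφdef])
  have hgderiv : ∀ t, HasDerivAt g (G t) t := fun t => by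
    have h1 : HasDerivAt (fun t => c * t^2) (c * (2*t)) t := by
      simpa using (hasDerivAt_pow 2 t).const_mul c
    have := h1.sub (hψderiv t)
    exact this.congr_deriv (by simp only [hGdef]; ring)
  have hφderiv : ∀ t, HasDerivAt φ (φ t * (1 - φ t)) t := fun t => by
    have h1 : HasDerivAt (fun t => p * Real.exp t) (p * Real.exp t) t :=
      (Real.hasDerivAt_exp t).const_mul p
    have h2 := h1.div (hDderiv t) (hD t).ne'
    refine h2.congr_deriv ?_
    have hDne := (hD t).ne'
    rw [hφdef]
    field_simp
  have hGderiv : ∀ t, HasDerivAt G (2*c - φ t * (1 - φ t)) t := fun t => by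
    have h1 : HasDerivAt (fun t => 2*c*t) (2*c) t := by
      simpa using (hasDerivAt_id t).const_mul (2*c)
    have h2 := (hφderiv t).sub_const p
    exact h1.sub h2
  have hGderiv' : ∀ x, deriv G x = 2*c - φ x * (1 - φ x) := fun x => (hGderiv x).deriv
  have hGcont : Continuous G := by
    have : Differentiable ℝ G := fun x => (hGderiv x).differentiableAt
    exact this.continuous
  have hGdiff : Differentiable ℝ G := fun x => (hGderiv x).differentiableAt
  -- values of G
  have hG0 : G 0 = 0 := by simp [hGdef, hφ0']
  have hGL : G L = 0 := by
    simp only [hGdef, hφL]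
    have : 2*c*L = (1-2*p)/2 := by linarith [h4cL]
    rw [this]; ring
  have hG2L : G (2*L) = 0 := by
    simp only [hGdef, hφ2L]
    have : 2*c*(2*L) = 1-2*p := by linarith [h4cL]
    rw [this]; ring
  -- concavity of G on Iic L
  have hconc : ConcaveOn ℝ (Set.Iic L) G := by
    apply AntitoneOn.concaveOn_of_deriv (convex_Iic L) hGcont.continuousOn
      hGdiff.differentiableOn
    intro x hx y hy hxy
    rw [interior_Iic] at hx hy
    rw [hGderiv', hGderiv']
    have h1 : φ x ≤ φ y := hφmono hxy
    have h2 : φ y ≤ 1/2 := by rw [← hφL]; exact hφmono (le_of_lt hy)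
    have h3 := hφ0 x
    nlinarith
  -- convexity of G on Ici L
  have hconv : ConvexOn ℝ (Set.Ici L) G := by
    apply MonotoneOn.convexOn_of_deriv (convex_Ici L) hGcont.continuousOn
      hGdiff.differentiableOn
    intro x hx y hy hxy
    rw [interior_Ici] at hx hy
    rw [hGderiv', hGderiv']
    have h1 : φ x ≤ φ y := hφmono hxy
    have h2 : (1:ℝ)/2 ≤ φ x := by rw [← hφL]; exact hφmono (le_of_lt hx)
    have h3 := hφ1 y
    nlinarith
  -- sign of G
  have hGneg : ∀ s ≤ (0:ℝ), G s ≤ 0 := by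
    intro s hs
    rcases eq_or_lt_of_le hs with h | h
    · rw [h, hG0]
    · have hne : L - s ≠ 0 := by intro h0; linarith
      have key := hconc.2 (show s ∈ Set.Iic L by simp only [Set.mem_Iic]; linarith)
        (Set.mem_Iic.2 le_rfl)
        (show (0:ℝ) ≤ L/(L-s) by apply div_nonneg <;> linarith)
        (show (0:ℝ) ≤ (-s)/(L-s) by apply div_nonneg <;> linarith)
        (show L/(L-s) + (-s)/(L-s) = 1 by field_simp; ring)
      simp only [smul_eq_mul] at key
      rw [show L/(L-s) * s + (-s)/(L-s) * L = 0 by field_simp; ring] at key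
      rw [hG0, hGL] at key
      simp only [mul_zero, add_zero] at key
      have hpos : 0 < L/(L-s) := div_pos hL (by linarith)
      exact le_of_mul_le_mul_left (by rw [mul_zero]; exact key) hpos
  have hGpos1 : ∀ s, 0 ≤ s → s ≤ L → 0 ≤ G s := by
    intro s hs0 hsL
    have hLne : L ≠ 0 := hL.ne'
    have key := hconc.2 (show (0:ℝ) ∈ Set.Iic L from Set.mem_Iic.2 hL.le)
      (Set.mem_Iic.2 le_rfl)
      (show (0:ℝ) ≤ (L-s)/L by apply div_nonneg <;> linarith)
      (show (0:ℝ) ≤ s/L by apply div_nonneg <;> linarith)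
      (show (L-s)/L + s/L = 1 by field_simp; ring)
    simp only [smul_eq_mul] at key
    rw [show (L-s)/L * (0:ℝ) + s/L * L = s by field_simp; ring] at key
    rw [hG0, hGL] at key
    simpa using key
  have hGneg2 : ∀ s, L ≤ s → s ≤ 2*L → G s ≤ 0 := by
    intro s hsL hs2L
    have hLne : L ≠ 0 := hL.ne'
    have key := hconv.2 (Set.mem_Ici.2 le_rfl)
      (show 2*L ∈ Set.Ici L by simp only [Set.mem_Ici]; linarith)
      (show (0:ℝ) ≤ (2*L-s)/L by apply div_nonneg <;> linarith)
      (show (0:ℝ) ≤ (s-L)/L by apply div_nonneg <;> linarith)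
      (show (2*L-s)/L + (s-L)/L = 1 by field_simp; ring)
    simp only [smul_eq_mul] at key
    rw [show (2*L-s)/L * L + (s-L)/L * (2*L) = s by field_simp; ring] at key
    rw [hGL, hG2L] at key
    simpa using key
  have hGpos2 : ∀ s, 2*L ≤ s → 0 ≤ G s := by
    intro s hs
    rcases eq_or_lt_of_le hs with h | h
    · rw [← h, hG2L]
    · have hsL : L < s := by linarith
      have hne : s - L ≠ 0 := by intro h0; linarith
      have key := hconv.2 (Set.mem_Ici.2 le_rfl) (Set.mem_Ici.2 hsL.le)
        (show (0:ℝ) ≤ (s-2*L)/(s-L) by apply div_nonneg <;> linarith)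
        (show (0:ℝ) ≤ L/(s-L) by apply div_nonneg <;> linarith)
        (show (s-2*L)/(s-L) + L/(s-L) = 1 by field_simp; ring)
      simp only [smul_eq_mul] at key
      rw [show (s-2*L)/(s-L) * L + L/(s-L) * s = 2*L by field_simp; ring] at key
      rw [hGL, hG2L] at key
      simp only [mul_zero, zero_add] at key
      have hpos : 0 < L/(s-L) := div_pos hL (by linarith)
      exact le_of_mul_le_mul_left (by rw [mul_zero]; exact key) hpos
  -- values of g
  have hg0 : g 0 = 0 := by simp [hgdef, hψdef, hDdef]
  have hg2L : g (2*L) = 0 := by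
    simp only [hgdef, hψdef, hD2L, ← hLdef]
    have : c * (2*L)^2 = (1-2*p)*L := by nlinarith [h4cL]
    rw [this]; ring
  have hgcont : Continuous g := by
    have : Differentiable ℝ g := fun x => (hgderiv x).differentiableAt
    exact this.continuous
  have hgdiff : Differentiable ℝ g := fun x => (hgderiv x).differentiableAt
  have hgd' : ∀ x, deriv g x = G x := fun x => (hgderiv x).deriv
  -- monotonicity of g on pieces, conclude g t ≥ 0
  have hgoal : 0 ≤ g t := by
    rcases le_or_gt t 0 with ht | ht
    · have hanti : AntitoneOn g (Set.Iic 0) :=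
        antitoneOn_of_deriv_nonpos (convex_Iic 0) hgcont.continuousOn
          hgdiff.differentiableOn (fun x hx => by
            rw [interior_Iic] at hx
            rw [hgd']; exact hGneg x hx.le)
      have := hanti (Set.mem_Iic.2 ht) (Set.mem_Iic.2 le_rfl) ht
      rwa [hg0] at this
    rcases le_or_gt t L with htL | htL
    · have hmono : MonotoneOn g (Set.Icc 0 L) :=
        monotoneOn_of_deriv_nonneg (convex_Icc 0 L) hgcont.continuousOn
          hgdiff.differentiableOn (fun x hx => by
            rw [interior_Icc] at hx
            rw [hgd']; exact hGpos1 x hx.1.le hx.2.le)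
      have := hmono (Set.mem_Icc.2 ⟨le_rfl, hL.le⟩) (Set.mem_Icc.2 ⟨ht.le, htL⟩) ht.le
      rwa [hg0] at this
    rcases le_or_gt t (2*L) with ht2L | ht2L
    · have hanti : AntitoneOn g (Set.Icc L (2*L)) :=
        antitoneOn_of_deriv_nonpos (convex_Icc L (2*L)) hgcont.continuousOn
          hgdiff.differentiableOn (fun x hx => by
            rw [interior_Icc] at hx
            rw [hgd']; exact hGneg2 x hx.1.le hx.2.le)
      have := hanti (Set.mem_Icc.2 ⟨htL.le, ht2L⟩)
        (Set.mem_Icc.2 ⟨by linarith, le_rfl⟩) ht2L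
      rwa [hg2L] at this
    · have hmono : MonotoneOn g (Set.Ici (2*L)) :=
        monotoneOn_of_deriv_nonneg (convex_Ici (2*L)) hgcont.continuousOn
          hgdiff.differentiableOn (fun x hx => by
            rw [interior_Ici] at hx
            rw [hgd']; exact hGpos2 x hx.le)
      have := hmono (Set.mem_Ici.2 le_rfl) (Set.mem_Ici.2 ht2L.le) ht2L.le
      rwa [hg2L] at this
  have h1 : Real.log (D t) - p * t ≤ c * t^2 := by
    have := hgoal; simp only [hgdef, hψdef] at this; linarith
  simpa only [hDdef] using h1

lemma ksK_symm (p : ℝ) : ksK (1-p) = ksK p := by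
  unfold ksK
  rw [show (1 - (1-p)) = p by ring, show p/(1-p) = ((1-p)/p)⁻¹ from (inv_div _ _).symm,
    Real.log_inv, show (1 - 2*(1-p)) = -(1-2*p) by ring, neg_div_neg_eq]

lemma ks_mgf_half {p : ℝ} (hp0 : 0 < p) (hp : p < 1/2) (t : ℝ) :
    p * Real.exp (t * (1 - p)) + (1 - p) * Real.exp (-(t * p))
      ≤ Real.exp ((ksK p * t) ^ 2) := by
  have hq : 0 < 1 - p := by linarith
  have hL : 0 < Real.log ((1-p)/p) :=
    Real.log_pos (by rw [lt_div_iff₀ hp0]; linarith)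
  have hD : 0 < p * Real.exp t + (1 - p) := by positivity
  have hLHS : p * Real.exp (t*(1-p)) + (1-p) * Real.exp (-(t*p))
      = Real.exp (Real.log (p * Real.exp t + (1-p)) - p * t) := by
    rw [Real.exp_sub, Real.exp_log hD, show t*(1-p) = t - t*p by ring,
      Real.exp_sub, Real.exp_neg, show p * t = t * p by ring]
    have := (Real.exp_pos (t*p)).ne'
    field_simp
  have hK : (ksK p * t)^2 = (1 - 2*p) / (4 * Real.log ((1-p)/p)) * t^2 := by
    have harg : 0 ≤ (1 - 2*p) / Real.log ((1-p)/p) := by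
      apply div_nonneg _ hL.le; linarith
    rw [ksK, mul_pow, mul_pow, Real.sq_sqrt harg]
    field_simp [hL.ne']
    ring
  rw [hLHS, hK]
  exact Real.exp_le_exp.2 (ks_psi_le hp0 hp t)

lemma ks_mgf {p : ℝ} (hp : p ∈ Set.Ioo (0:ℝ) 1) (hp2 : p ≠ 1/2) (t : ℝ) :
    p * Real.exp (t * (1 - p)) + (1 - p) * Real.exp (-(t * p))
      ≤ Real.exp ((ksK p * t) ^ 2) := by
  obtain ⟨hp0, hp1⟩ := hp
  rcases lt_or_gt_of_ne hp2 with h | h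
  · exact ks_mgf_half hp0 h t
  · have h1 : 0 < 1 - p := by linarith
    have h2 : 1 - p < 1/2 := by linarith
    have key := ks_mgf_half h1 h2 (-t)
    rw [show (1 - (1-p)) = p by ring, show -t * p = -(t*p) by ring,
      show -(-t * (1-p)) = t * (1-p) by ring,
      show (ksK (1-p) * (-t))^2 = (ksK p * t)^2 by rw [ksK_symm]; ring] at key
    linarith

/-- Kearns–Saul inequality. -/
theorem stmt0 {Ω : Type*} [MeasurableSpace Ω] (μ : Measure Ω) [IsProbabilityMeasure μ]
    (δ : Ω → ℝ) (hmeas : Measurable δ) (h01 : ∀ ω, δ ω = 0 ∨ δ ω = 1)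
    (p : ℝ) (hp : p ∈ Set.Ioo (0:ℝ) 1) (hp2 : p ≠ 1/2)
    (hlaw : μ {ω | δ ω = 1} = ENNReal.ofReal p) (t : ℝ) :
    (∫ ω, Real.exp (t * (δ ω - p)) ∂μ)
        = p * Real.exp (t * (1 - p)) + (1 - p) * Real.exp (-(t * p))
      ∧ p * Real.exp (t * (1 - p)) + (1 - p) * Real.exp (-(t * p))
        ≤ Real.exp ((ksK p * t) ^ 2) := by
  refine ⟨?_, ks_mgf hp hp2 t⟩
  have hA : MeasurableSet {ω | δ ω = 1} := hmeas (measurableSet_singleton 1)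
  have hfun : (fun ω => Real.exp (t * (δ ω - p)))
      = fun ω => Set.indicator {ω | δ ω = 1}
          (fun _ => Real.exp (t * (1 - p)) - Real.exp (-(t * p))) ω
          + Real.exp (-(t * p)) := by
    funext ω
    rcases h01 ω with h | h
    · rw [Set.indicator_of_notMem (by simp [Set.mem_setOf_eq, h]), h,
        show t * ((0:ℝ) - p) = -(t*p) by ring, zero_add]
    · rw [Set.indicator_of_mem (by simp [Set.mem_setOf_eq, h]), h]
      ring
  rw [hfun, integral_add ((integrable_const _).indicator hA) (integrable_const _),
    integral_indicator_const _ hA, integral_const, measureReal_def, measureReal_def, hlaw, measure_univ]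
  simp only [smul_eq_mul, ENNReal.toReal_one, one_mul,
    ENNReal.toReal_ofReal hp.1.le]
  ring
end
end

section
/- Let L̄_δ = L_δ + Σᵢ α(1−δᵢ) eᵢeᵢᵀ be the augmented Laplacian of a site-percolated weighted graph, where L_δ = Σ_{i<j} δᵢδⱼ w_{ij}(eᵢ−eⱼ)(eᵢ−eⱼ)ᵀ, α ≥ 0, and δᵢ ∈ {0,1}. If the algebraic connectivity a_δ (the second smallest eigenvalue of the Laplacian of the surviving subgraph, with surviving vertices those i with δᵢ = 1) satisfies a_δ ≤ α, then a_δ = λ₂(L̄_δ), the second smallest eigenvalue of L̄_δ. -/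
open MeasureTheory ProbabilityTheory Matrix

noncomputable section

/-- Laplacian of the subgraph induced on the surviving vertices. -/
def subLap {n : ℕ} (w : Fin n → Fin n → ℝ) (δ : Fin n → Bool) :
    Matrix {i : Fin n // δ i = true} {i : Fin n // δ i = true} ℝ :=
  Matrix.of fun i j =>
    (if (i : Fin n) = (j : Fin n) then ∑ k : {i : Fin n // δ i = true}, w i k else 0) - w i j

open Polynomial

/-! ### Auxiliary lemmas -/

lemma lapOf_apply {n : ℕ} (w : Fin n → Fin n → ℝ) (c : Fin n → ℝ)
    (hsymm : ∀ i j, w i j = w j i) (hdiag : ∀ i, w i i = 0) (i j : Fin n) :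
    lapOf w c i j = (if i = j then c i * ∑ k, c k * w i k else 0) - c i * c j * w i j := by
  classical
  set t : Fin n → Fin n → ℝ := fun a b => (c a * c b * w a b) *
    (((if i = a then (1:ℝ) else 0) - (if i = b then 1 else 0)) *
     ((if j = a then (1:ℝ) else 0) - (if j = b then 1 else 0))) with ht
  have hentry : lapOf w c i j = ∑ a : Fin n, ∑ b : Fin n, (if a < b then t a b else 0) := by
    simp only [lapOf, Matrix.sum_apply]
    refine Finset.sum_congr rfl fun a _ => Finset.sum_congr rfl fun b _ => ?_
    by_cases h : a < b
    · simp [h, ht, vecMulVec_apply, ev, Pi.single_apply]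
    · simp [h]
  have hsymt : ∀ a b, t a b = t b a := by
    intro a b; simp only [ht]; rw [hsymm a b]; ring
  have hdt : ∀ a, t a a = 0 := by intro a; simp [ht]
  have hdouble : (∑ a : Fin n, ∑ b : Fin n, (if a < b then t a b else 0)) * 2
      = ∑ a : Fin n, ∑ b : Fin n, t a b := by
    have h2 : (∑ a : Fin n, ∑ b : Fin n, (if a < b then t a b else 0))
        = ∑ a : Fin n, ∑ b : Fin n, (if b < a then t a b else 0) := by
      rw [Finset.sum_comm]
      refine Finset.sum_congr rfl fun a _ => Finset.sum_congr rfl fun b _ => ?_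
      by_cases h : b < a <;> simp [h, hsymt a b]
    rw [mul_two]; nth_rewrite 2 [h2]
    rw [← Finset.sum_add_distrib]
    refine Finset.sum_congr rfl fun a _ => ?_
    rw [← Finset.sum_add_distrib]
    refine Finset.sum_congr rfl fun b _ => ?_
    rcases lt_trichotomy a b with h | h | h
    · simp [h, not_lt_of_gt h]
    · simp [h, hdt]
    · simp [h, not_lt_of_gt h]
  have expand : ∀ a b : Fin n, t a b =
      ((if i = a then (if j = a then c a * c b * w a b else 0) else 0)
      - (if i = a then (if j = b then c a * c b * w a b else 0) else 0))
      - ((if i = b then (if j = a then c a * c b * w a b else 0) else 0)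
      - (if i = b then (if j = b then c a * c b * w a b else 0) else 0)) := by
    intro a b; simp only [ht]; split_ifs <;> ring
  have hT : (∑ a : Fin n, ∑ b : Fin n, t a b)
      = ((if i = j then c i * ∑ k, c k * w i k else 0) - c i * c j * w i j) * 2 := by
    have hswap : ∑ x : Fin n, c x * c i * w x i = ∑ x : Fin n, c i * c x * w i x :=
      Finset.sum_congr rfl fun k _ => by rw [hsymm k i]; ring
    simp only [expand, Finset.sum_sub_distrib, Finset.sum_ite_eq, Finset.mem_univ, if_true]
    by_cases hij : i = j
    · subst hij
      simp only [if_true, hdiag, Finset.mul_sum]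
      rw [hswap]
      simp [hdiag]
      ring_nf
    · simp [hij, Ne.symm hij, hsymm j i]; ring
  rw [hentry]
  nlinarith [hdouble, hT]

section charpolyAux

variable {m : Type*} [Fintype m] [DecidableEq m]

lemma charpoly_conj_units (U D V : Matrix m m ℝ) (h1 : U * V = 1) :
    (U * D * V).charpoly = D.charpoly := by
  have hc : charmatrix (U * D * V) =
      U.map C * charmatrix D * V.map C := by
    have hmap : (U * D * V).map (C : ℝ →+* ℝ[X]) = U.map C * D.map C * V.map C := by
      simp [Matrix.map_mul]
    have hUV : U.map (C : ℝ →+* ℝ[X]) * V.map C = 1 := by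
      rw [← Matrix.map_mul, h1]; simp
    simp only [charmatrix, RingHom.mapMatrix_apply, hmap]
    rw [Matrix.mul_sub, Matrix.sub_mul]
    congr 1
    · rw [scalar_apply, ← Matrix.smul_one_eq_diagonal, Matrix.mul_smul, Matrix.mul_one,
        Matrix.smul_mul, hUV]
  have hdetUV : (U.map (C : ℝ →+* ℝ[X])).det * (V.map C).det = 1 := by
    rw [← Matrix.det_mul, ← Matrix.map_mul, h1]; simp
  rw [Matrix.charpoly, hc, Matrix.det_mul, Matrix.det_mul, Matrix.charpoly]
  calc (U.map (C:ℝ →+* ℝ[X])).det * (charmatrix D).det * (V.map C).det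
      = ((U.map (C:ℝ →+* ℝ[X])).det * (V.map C).det) * (charmatrix D).det := by ring
    _ = (charmatrix D).det := by rw [hdetUV, one_mul]

lemma charpoly_diagonal' (d : m → ℝ) :
    (Matrix.diagonal d).charpoly = ∏ i : m, (X - C (d i)) := by
  have : charmatrix (Matrix.diagonal d) = Matrix.diagonal (fun i => X - C (d i)) := by
    ext i j
    by_cases h : i = j
    · subst h; simp
    · simp [h, Matrix.diagonal_apply_ne _ h]
  rw [Matrix.charpoly, this, Matrix.det_diagonal]

lemma charpoly_smul_one (a : ℝ) :
    (a • (1 : Matrix m m ℝ)).charpoly = (X - C a) ^ (Fintype.card m) := by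
  have : a • (1 : Matrix m m ℝ) = Matrix.diagonal (fun _ => a) := by
    rw [Matrix.smul_one_eq_diagonal]
  rw [this, charpoly_diagonal', Finset.prod_const, Finset.card_univ]

lemma hermitian_charpoly_roots {A : Matrix m m ℝ} (hA : A.IsHermitian) :
    A.charpoly.roots = Finset.univ.val.map hA.eigenvalues := by
  have hspec := hA.spectral_theorem
  have hU : (hA.eigenvectorUnitary : Matrix m m ℝ)
      * (star (hA.eigenvectorUnitary : Matrix m m ℝ)) = 1 := by
    simpa using (Matrix.mem_unitaryGroup_iff.mp hA.eigenvectorUnitary.2)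
  have h1 : A.charpoly = (Matrix.diagonal (RCLike.ofReal ∘ hA.eigenvalues)).charpoly := by
    conv_lhs => rw [hspec]
    exact charpoly_conj_units _ _ _ hU
  have h2 : (Matrix.diagonal (RCLike.ofReal ∘ hA.eigenvalues) : Matrix m m ℝ).charpoly
      = ∏ i : m, (X - C (hA.eigenvalues i)) := by
    rw [charpoly_diagonal']; simp [RCLike.ofReal]
  rw [h1, h2]
  have := Polynomial.roots_multiset_prod_X_sub_C (Finset.univ.val.map hA.eigenvalues)
  rw [← this]
  congr 1
  rw [Multiset.map_map]
  rfl

end charpolyAux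

lemma getD_sort_add (S : Multiset ℝ) (k : ℕ) (a x y : ℝ) (t : List ℝ)
    (hS : S.sort (· ≤ ·) = x :: y :: t) (hya : y ≤ a) :
    ((S + Multiset.replicate k a).sort (· ≤ ·)).getD 1 0 = y := by
  have hsorted : List.Pairwise (· ≤ ·) (x :: y :: t) := hS ▸ Multiset.pairwise_sort S _
  have hSval : S = (x ::ₘ y ::ₘ (t : Multiset ℝ)) := by
    rw [← Multiset.sort_eq S (· ≤ ·), hS]; rfl
  set rest := (Multiset.sort ((t : Multiset ℝ) + Multiset.replicate k a) (· ≤ ·)) with hrest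
  have hkey : (S + Multiset.replicate k a).sort (· ≤ ·) = x :: y :: rest := by
    have hperm : ((S + Multiset.replicate k a).sort (· ≤ ·) : List ℝ).Perm (x :: y :: rest) := by
      rw [← Multiset.coe_eq_coe]
      rw [Multiset.sort_eq]
      have : ((x :: y :: rest : List ℝ) : Multiset ℝ) = x ::ₘ y ::ₘ (rest : Multiset ℝ) := rfl
      rw [this, hrest, Multiset.sort_eq, hSval]
      rw [Multiset.cons_add, Multiset.cons_add]
    have hsorted2 : List.Pairwise (· ≤ ·) (x :: y :: rest) := by
      have hmem : ∀ z ∈ rest, y ≤ z := by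
        intro z hz
        have : z ∈ (t : Multiset ℝ) + Multiset.replicate k a := by
          rw [hrest] at hz
          rw [← Multiset.sort_eq ((t : Multiset ℝ) + Multiset.replicate k a) (· ≤ ·)]
          exact_mod_cast hz
        rcases Multiset.mem_add.mp this with h | h
        · exact ((List.pairwise_cons.mp (List.pairwise_cons.mp hsorted).2).1 z (by exact_mod_cast h))
        · rw [Multiset.eq_of_mem_replicate h]; exact hya
      rw [List.pairwise_cons, List.pairwise_cons]
      refine ⟨?_, hmem, (Multiset.pairwise_sort _ _ : List.Pairwise _ rest)⟩
      intro b hb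
      rcases List.mem_cons.mp hb with h | h
      · exact h ▸ (List.pairwise_cons.mp hsorted).1 y (by simp)
      · exact le_trans ((List.pairwise_cons.mp hsorted).1 y (by simp)) (hmem b h)
    exact List.Perm.eq_of_pairwise' (Multiset.pairwise_sort _ _) hsorted2 hperm
  rw [hkey]; rfl

lemma aug_block {n : ℕ} (w : Fin n → Fin n → ℝ)
    (hsymm : ∀ i j, w i j = w j i) (hdiag : ∀ i, w i i = 0)
    (α : ℝ) (δ : Fin n → Bool) :
    (augLap w α (fun i => if δ i then 1 else 0)).submatrix
        (Equiv.sumCompl (fun i : Fin n => δ i = true))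
        (Equiv.sumCompl (fun i : Fin n => δ i = true))
      = Matrix.fromBlocks (subLap w δ) 0 0 (α • (1 : Matrix _ _ ℝ)) := by
  classical
  set c : Fin n → ℝ := fun i => if δ i then 1 else 0 with hc
  have hcs : ∀ i : Fin n, δ i = true → c i = 1 := fun i h => by simp [hc, h]
  have hcg : ∀ i : Fin n, ¬ δ i = true → c i = 0 := fun i h => by simp [hc, h]
  have hsum : ∀ i : Fin n, (∑ k, c k * w i k) = ∑ k : {k : Fin n // δ k = true}, w i k := by
    intro i
    rw [← Finset.sum_subtype (Finset.univ.filter (fun k => δ k = true))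
      (fun k => by simp) (fun k => w i k)]
    rw [Finset.sum_filter]
    refine Finset.sum_congr rfl fun k _ => ?_
    by_cases h : δ k = true <;> simp [hc, h]
  ext a b
  cases a with
  | inl i =>
    cases b with
    | inl j =>
      simp only [Matrix.submatrix_apply, Equiv.sumCompl_apply_inl, Matrix.fromBlocks_apply₁₁]
      rw [augLap, Matrix.add_apply, lapOf_apply w c hsymm hdiag]
      rw [hcs _ i.2, hcs _ j.2, hsum]
      have hd : (α • Matrix.diagonal (fun i => 1 - c i)) (i : Fin n) (j : Fin n) = 0 := by
        by_cases h : (i : Fin n) = (j : Fin n)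
        · simp [h, Matrix.diagonal_apply_eq, hcs _ j.2]
        · simp [Matrix.diagonal_apply_ne _ h]
      rw [hd, add_zero, subLap]
      simp only [Matrix.of_apply]
      ring
    | inr j =>
      simp only [Matrix.submatrix_apply, Equiv.sumCompl_apply_inl, Equiv.sumCompl_apply_inr,
        Matrix.fromBlocks_apply₁₂, Matrix.zero_apply]
      have hne : (i : Fin n) ≠ (j : Fin n) := by
        intro h; exact j.2 (h ▸ i.2)
      rw [augLap, Matrix.add_apply, lapOf_apply w c hsymm hdiag]
      simp [hne, hcg _ j.2, Matrix.diagonal_apply_ne _ hne]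
  | inr i =>
    cases b with
    | inl j =>
      simp only [Matrix.submatrix_apply, Equiv.sumCompl_apply_inl, Equiv.sumCompl_apply_inr,
        Matrix.fromBlocks_apply₂₁, Matrix.zero_apply]
      have hne : (i : Fin n) ≠ (j : Fin n) := by
        intro h; exact i.2 (h ▸ j.2)
      rw [augLap, Matrix.add_apply, lapOf_apply w c hsymm hdiag]
      simp [hne, hcg _ i.2, Matrix.diagonal_apply_ne _ hne]
    | inr j =>
      simp only [Matrix.submatrix_apply, Equiv.sumCompl_apply_inr, Matrix.fromBlocks_apply₂₂]
      rw [augLap, Matrix.add_apply, lapOf_apply w c hsymm hdiag]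
      by_cases h : (i : Fin n) = (j : Fin n)
      · have hij : i = j := Subtype.ext h
        subst hij
        simp [h, hcg _ i.2, Matrix.diagonal_apply_eq, Matrix.smul_apply, Matrix.one_apply]
      · have hij : i ≠ j := fun hh => h (congrArg _ hh)
        simp [h, hij, hcg _ i.2, Matrix.diagonal_apply_ne _ h, Matrix.smul_apply,
          Matrix.one_apply_ne hij]

/-- If the algebraic connectivity of the surviving subgraph is at most `α`, it equals the
second smallest eigenvalue of the augmented Laplacian. -/
theorem stmt4 {n : ℕ} (w : Fin n → Fin n → ℝ)
    (hsymm : ∀ i j, w i j = w j i) (hnn : ∀ i j, 0 ≤ w i j) (hdiag : ∀ i, w i i = 0)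
    (α : ℝ) (hα : 0 ≤ α) (δ : Fin n → Bool)
    (hcard : 1 < Fintype.card {i : Fin n // δ i = true})
    (hsub : (subLap w δ).IsHermitian)
    (haug : (augLap w α (fun i => if δ i then 1 else 0)).IsHermitian)
    (hle : lambda2 hsub ≤ α) :
    lambda2 hsub = lambda2 haug := by
  classical
  set k := Fintype.card {i : Fin n // ¬ δ i = true} with hk
  -- charpoly factorization
  have hblock := aug_block w hsymm hdiag α δ
  set e := Equiv.sumCompl (fun i : Fin n => δ i = true) with he
  have hcp : (augLap w α (fun i => if δ i then 1 else 0)).charpoly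
      = (subLap w δ).charpoly * (X - C α) ^ k := by
    have h1 : ((augLap w α (fun i => if δ i then 1 else 0)).submatrix e e).charpoly
        = (augLap w α (fun i => if δ i then 1 else 0)).charpoly := by
      have := Matrix.charpoly_reindex (R := ℝ) e.symm
        (augLap w α (fun i => if δ i then 1 else 0))
      simpa [Matrix.reindex_apply] using this
    rw [← h1, hblock, Matrix.charpoly_fromBlocks_zero₁₂, charpoly_smul_one]
  -- eigenvalue multisets
  have hroots : (Finset.univ.val.map haug.eigenvalues)
      = (Finset.univ.val.map hsub.eigenvalues) + Multiset.replicate k α := by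
    rw [← hermitian_charpoly_roots haug, ← hermitian_charpoly_roots hsub, hcp]
    have hne1 : (subLap w δ).charpoly ≠ 0 := (Matrix.charpoly_monic _).ne_zero
    have hne2 : ((X - C α : ℝ[X]) ^ k) ≠ 0 := ((monic_X_sub_C α).pow k).ne_zero
    rw [Polynomial.roots_mul (mul_ne_zero hne1 hne2), Polynomial.roots_pow,
      Polynomial.roots_X_sub_C, Multiset.nsmul_singleton]
  -- the sorted list of the subgraph eigenvalues has at least two entries
  have hlen : 2 ≤ (sortedEigs hsub).length := by
    rw [sortedEigs, Multiset.length_sort, Multiset.card_map]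
    simpa [Finset.card_univ] using Nat.succ_le_of_lt hcard
  have h0 : sortedEigs hsub ≠ [] := by intro h; rw [h] at hlen; simp at hlen
  obtain ⟨x, L', hL⟩ := List.exists_cons_of_ne_nil h0
  have h1 : L' ≠ [] := by
    intro h; rw [h] at hL; rw [hL] at hlen; simp at hlen
  obtain ⟨y, t, hL'⟩ := List.exists_cons_of_ne_nil h1
  have hxyt : sortedEigs hsub = x :: y :: t := by rw [hL, hL']
  have hl2 : lambda2 hsub = y := by rw [lambda2, hxyt]; rfl
  have hya : y ≤ α := hl2 ▸ hle
  have : lambda2 haug = y := by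
    rw [lambda2, sortedEigs, hroots]
    exact getD_sort_add _ k α x y t hxyt hya
  rw [hl2, this]
end
end

section
/- For p ∈ [1/2, 1), the Kearns–Saul parameter satisfies K(p) = (1/2)√((1−2p)/log((1−p)/p)) ≤ 1/(2√(log(1/(1−p)))). -/
open MeasureTheory ProbabilityTheory Matrix

noncomputable section

lemma ks_aux (q : ℝ) (hq0 : 0 < q) (hq : q ≤ 1/2) :
    2*q*Real.log q ≤ Real.log (1-q) := by
  have h1 : (1-2*q) • Real.log 1 + (2*q) • Real.log (1/2) ≤
      Real.log ((1-2*q) • (1:ℝ) + (2*q) • (1/2:ℝ)) := by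
    apply (strictConcaveOn_log_Ioi.concaveOn).2
    · exact Set.mem_Ioi.mpr one_pos
    · exact Set.mem_Ioi.mpr (by norm_num)
    · linarith
    · linarith
    · ring
  have h2 : (1-2*q) • (1:ℝ) + (2*q) • (1/2:ℝ) = 1 - q := by
    simp [smul_eq_mul]; ring
  rw [h2, Real.log_one] at h1
  simp only [smul_eq_mul, mul_zero, zero_add] at h1
  have h3 : Real.log q ≤ Real.log (1/2) := Real.log_le_log hq0 hq
  nlinarith [h1, h3, hq0.le]

/-- Bound on the Kearns–Saul parameter for `p ∈ [1/2, 1)`. -/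
theorem stmt9 (p : ℝ) (hp : p ∈ Set.Ico (1/2 : ℝ) 1) :
    ksK p ≤ 1 / (2 * Real.sqrt (Real.log (1 / (1 - p)))) := by
  obtain ⟨hp1, hp2⟩ := hp
  have h1p : 0 < 1 - p := by linarith
  have hp0 : 0 < p := by linarith
  have hL : 0 < Real.log (1/(1-p)) := Real.log_pos (by rw [lt_div_iff₀ h1p]; linarith)
  have hLval : Real.log (1/(1-p)) = -Real.log (1-p) := by
    rw [one_div, Real.log_inv]
  have hA : (1 - 2*p) / Real.log ((1-p)/p) ≤ 1 / Real.log (1/(1-p)) := by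
    rcases eq_or_lt_of_le hp1 with h | h
    · have : 1 - 2*p = 0 := by linarith [h.symm ▸ (rfl : p = p)]
      rw [← h]; norm_num
      positivity
    · have hD : Real.log ((1-p)/p) < 0 := by
        apply Real.log_neg
        · positivity
        · rw [div_lt_one hp0]; linarith
      have hDval : Real.log ((1-p)/p) = Real.log (1-p) - Real.log p :=
        Real.log_div (ne_of_gt h1p) (ne_of_gt hp0)
      have key : 2*(1-p)*Real.log (1-p) ≤ Real.log p := by
        have := ks_aux (1-p) h1p (by linarith)
        simpa using this
      have h1 : (1 - 2*p) / Real.log ((1-p)/p) = (2*p - 1) / (-Real.log ((1-p)/p)) := by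
        rw [div_neg, ← neg_div, neg_div]; ring_nf
      rw [h1, div_le_div_iff₀ (by linarith : (0:ℝ) < -Real.log ((1-p)/p)) hL]
      rw [hLval, hDval]
      nlinarith [key]
  calc ksK p = (1/2) * Real.sqrt ((1 - 2*p) / Real.log ((1-p)/p)) := rfl
    _ ≤ (1/2) * Real.sqrt (1 / Real.log (1/(1-p))) :=
        mul_le_mul_of_nonneg_left (Real.sqrt_le_sqrt hA) (by norm_num)
    _ = 1 / (2 * Real.sqrt (Real.log (1/(1-p)))) := by
        rw [show (1:ℝ)/Real.log (1/(1-p)) = (Real.log (1/(1-p)))⁻¹ from one_div _, Real.sqrt_inv]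
        field_simp
end
end

section
/- Let D_ξ, D_p be the diagonal matrices with diagonals ξᵢ = δᵢ − pᵢ and pᵢ respectively, where δᵢ ∈ {0,1}, and let A be a symmetric n×n matrix with nonnegative entries. Then ‖D_ξ A D_ξ‖² ≤ ‖D_q^{1/2} A D_q A D_q^{1/2}‖ + ‖D_q^{1/2} A D_{ξ∘(1−2p)} A D_q^{1/2}‖ + ‖A D_{ξ∘(1−2p)} A‖, where q = p∘(1−p) (entrywise) and ξ∘(1−2p) denotes the vector with entries ξᵢ(1−2pᵢ). -/
open MeasureTheory ProbabilityTheory Matrix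

noncomputable section

open scoped Matrix.Norms.L2Operator

lemma opNorm_eq {n : ℕ} (A : Matrix (Fin n) (Fin n) ℝ) : opNorm A = ‖A‖ := rfl

lemma norm_diag_le_one {n : ℕ} (v : Fin n → ℝ) (hv : ∀ i, |v i| ≤ 1) :
    ‖(Matrix.diagonal v : Matrix (Fin n) (Fin n) ℝ)‖ ≤ 1 := by
  rw [Matrix.l2_opNorm_def]
  apply ContinuousLinearMap.opNorm_le_bound _ zero_le_one
  intro x
  rw [one_mul]
  have hx : (LinearEquiv.trans Matrix.toEuclideanLin
      LinearMap.toContinuousLinearMap (Matrix.diagonal v)) x =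
      (WithLp.equiv 2 (Fin n → ℝ)).symm ((Matrix.diagonal v) *ᵥ (WithLp.equiv 2 (Fin n → ℝ) x)) :=
    rfl
  rw [hx]
  rw [EuclideanSpace.norm_eq, EuclideanSpace.norm_eq]
  apply Real.sqrt_le_sqrt
  apply Finset.sum_le_sum
  intro i _
  simp only [WithLp.equiv_symm_apply, WithLp.ofLp_toLp, Matrix.mulVec_diagonal, Real.norm_eq_abs, abs_mul]
  have h1 := hv i
  have h3 : (WithLp.equiv 2 (Fin n → ℝ)) x i = x i := rfl
  rw [h3]
  exact pow_le_pow_left₀ (by positivity) (mul_le_of_le_one_left (abs_nonneg _) h1) 2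

set_option maxHeartbeats 1000000 in
/-- Deterministic matrix-norm bound for `‖D_ξ A D_ξ‖²`. -/
theorem stmt12 {n : ℕ} (A : Matrix (Fin n) (Fin n) ℝ) (hA : A.IsHermitian)
    (hnn : ∀ i j, 0 ≤ A i j)
    (p : Fin n → ℝ) (hp : ∀ i, p i ∈ Set.Icc (0:ℝ) 1)
    (δ : Fin n → ℝ) (h01 : ∀ i, δ i = 0 ∨ δ i = 1) :
    opNorm (Matrix.diagonal (fun i => δ i - p i) * A *
        Matrix.diagonal (fun i => δ i - p i)) ^ 2 ≤
      opNorm (Matrix.diagonal (fun i => Real.sqrt (p i * (1 - p i))) * A *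
          Matrix.diagonal (fun i => p i * (1 - p i)) * A *
          Matrix.diagonal (fun i => Real.sqrt (p i * (1 - p i))))
      + opNorm (Matrix.diagonal (fun i => Real.sqrt (p i * (1 - p i))) * A *
          Matrix.diagonal (fun i => (δ i - p i) * (1 - 2 * p i)) * A *
          Matrix.diagonal (fun i => Real.sqrt (p i * (1 - p i))))
      + opNorm (A * Matrix.diagonal (fun i => (δ i - p i) * (1 - 2 * p i)) * A) := by
  simp only [opNorm_eq]
  set D : Matrix (Fin n) (Fin n) ℝ := Matrix.diagonal (fun i => δ i - p i) with hD
  set Dq : Matrix (Fin n) (Fin n) ℝ := Matrix.diagonal (fun i => p i * (1 - p i)) with hDq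
  set Dr : Matrix (Fin n) (Fin n) ℝ :=
    Matrix.diagonal (fun i => (δ i - p i) * (1 - 2 * p i)) with hDr
  set Ds : Matrix (Fin n) (Fin n) ℝ :=
    Matrix.diagonal (fun i => Real.sqrt (p i * (1 - p i))) with hDs
  have hAH : Aᴴ = A := hA
  have hDH : Dᴴ = D := by
    rw [hD, Matrix.diagonal_conjTranspose]
    congr 1
  have hDsH : Dsᴴ = Ds := by
    rw [hDs, Matrix.diagonal_conjTranspose]
    congr 1
  have hDD : D * D = Dq + Dr := by
    rw [hD, hDq, hDr, Matrix.diagonal_mul_diagonal, Matrix.diagonal_add]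
    have hf : (fun i => (δ i - p i) * (δ i - p i)) =
        fun i => p i * (1 - p i) + (δ i - p i) * (1 - 2 * p i) := by
      funext i
      rcases h01 i with h | h <;> rw [h] <;> ring
    rw [hf]
  have hss : Ds * Ds = Dq := by
    rw [hDs, hDq, Matrix.diagonal_mul_diagonal]
    have hf : (fun i => Real.sqrt (p i * (1 - p i)) * Real.sqrt (p i * (1 - p i))) =
        fun i => p i * (1 - p i) := by
      funext i
      exact Real.mul_self_sqrt (mul_nonneg (hp i).1 (by linarith [(hp i).2]))
    rw [hf]
  have hDle : ‖D‖ ≤ 1 := by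
    refine norm_diag_le_one _ (fun i => ?_)
    rw [abs_le]
    rcases h01 i with h | h <;> rw [h] <;>
      exact ⟨by linarith [(hp i).1, (hp i).2], by linarith [(hp i).1, (hp i).2]⟩
  have hMH : (D * A * D)ᴴ = D * A * D := by
    rw [Matrix.conjTranspose_mul, Matrix.conjTranspose_mul, hAH, hDH, Matrix.mul_assoc]
  have step1 : ‖D * A * D‖ ^ 2 = ‖(D * A * D) * (D * A * D)‖ := by
    rw [sq, ← Matrix.l2_opNorm_conjTranspose_mul_self (D * A * D), hMH]
  have step2 : (D * A * D) * (D * A * D) = D * A * Dq * A * D + D * A * Dr * A * D := by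
    have h1 : (D * A * D) * (D * A * D) = D * A * (D * D) * A * D := by noncomm_ring
    rw [h1, hDD]; noncomm_ring
  have e1 : D * A * Dq * A * D = ((Ds * A * D)ᴴ) * (Ds * A * D) := by
    rw [Matrix.conjTranspose_mul, Matrix.conjTranspose_mul, hAH, hDH, hDsH, ← hss]
    noncomm_ring
  have e2 : Ds * A * (D * D) * A * Ds = (Ds * A * D) * ((Ds * A * D)ᴴ) := by
    rw [Matrix.conjTranspose_mul, Matrix.conjTranspose_mul, hAH, hDH, hDsH]
    noncomm_ring
  have key1 : ‖D * A * Dq * A * D‖ = ‖Ds * A * (D * D) * A * Ds‖ := by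
    have C1 := Matrix.l2_opNorm_conjTranspose_mul_self (Ds * A * D)
    have C2 := Matrix.l2_opNorm_conjTranspose_mul_self ((Ds * A * D)ᴴ)
    rw [Matrix.conjTranspose_conjTranspose, Matrix.l2_opNorm_conjTranspose] at C2
    rw [e1, e2, C1, C2]
  have key1' : ‖D * A * Dq * A * D‖ ≤
      ‖Ds * A * Dq * A * Ds‖ + ‖Ds * A * Dr * A * Ds‖ := by
    rw [key1, hDD]
    have h2 : Ds * A * (Dq + Dr) * A * Ds = Ds * A * Dq * A * Ds + Ds * A * Dr * A * Ds := by
      noncomm_ring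
    rw [h2]
    exact norm_add_le _ _
  have key2 : ‖D * A * Dr * A * D‖ ≤ ‖A * Dr * A‖ := by
    have e : D * A * Dr * A * D = D * (A * Dr * A) * D := by noncomm_ring
    rw [e]
    have b1 : ‖D * (A * Dr * A) * D‖ ≤ ‖D * (A * Dr * A)‖ * ‖D‖ :=
      Matrix.l2_opNorm_mul (D * (A * Dr * A)) D
    have b2 : ‖D * (A * Dr * A)‖ ≤ ‖D‖ * ‖A * Dr * A‖ :=
      Matrix.l2_opNorm_mul D (A * Dr * A)
    have n1 : (0:ℝ) ≤ ‖D‖ := norm_nonneg _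
    have n2 : (0:ℝ) ≤ ‖A * Dr * A‖ := norm_nonneg _
    have n3 : (0:ℝ) ≤ ‖D * (A * Dr * A)‖ := norm_nonneg _
    nlinarith
  calc ‖D * A * D‖ ^ 2 = ‖D * A * Dq * A * D + D * A * Dr * A * D‖ := by rw [step1, step2]
    _ ≤ ‖D * A * Dq * A * D‖ + ‖D * A * Dr * A * D‖ := norm_add_le _ _
    _ ≤ (‖Ds * A * Dq * A * Ds‖ + ‖Ds * A * Dr * A * Ds‖) + ‖A * Dr * A‖ :=
        add_le_add key1' key2
    _ = _ := by ring
end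
end

section
/- Let D_p and D_ξ be diagonal matrices with entries pᵢ ∈ [0,1] and ξᵢ = δᵢ − pᵢ (δᵢ ∈ {0,1}) and A a symmetric matrix. Then ‖D_p A D_ξ‖² ≤ ‖D_p A D_{p∘(1−p)}^{1/2}‖² + ‖A D_{ξ∘(1−2p)} A‖, where p∘(1−p) and ξ∘(1−2p) are entrywise products. -/
open MeasureTheory ProbabilityTheory Matrix

noncomputable section

/-- Deterministic matrix-norm bound for `‖D_p A D_ξ‖²`. -/
theorem stmt13 {n : ℕ} (A : Matrix (Fin n) (Fin n) ℝ) (hA : A.IsHermitian)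
    (p : Fin n → ℝ) (hp : ∀ i, p i ∈ Set.Icc (0:ℝ) 1)
    (δ : Fin n → ℝ) (h01 : ∀ i, δ i = 0 ∨ δ i = 1) :
    opNorm (Matrix.diagonal p * A * Matrix.diagonal (fun i => δ i - p i)) ^ 2 ≤
      opNorm (Matrix.diagonal p * A *
          Matrix.diagonal (fun i => Real.sqrt (p i * (1 - p i)))) ^ 2
      + opNorm (A * Matrix.diagonal (fun i => (δ i - p i) * (1 - 2 * p i)) * A) := by
  classical
  set f := Matrix.toEuclideanCLM (𝕜 := ℝ) (n := Fin n) with hf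
  set Dp := Matrix.diagonal p with hDp
  set Dξ := Matrix.diagonal (fun i => δ i - p i) with hDξ
  set Ds := Matrix.diagonal (fun i => Real.sqrt (p i * (1 - p i))) with hDs
  set M := A * Matrix.diagonal (fun i => (δ i - p i) * (1 - 2 * p i)) * A with hM
  have hAH : Aᴴ = A := hA
  have hsq : ∀ i, Real.sqrt (p i * (1 - p i)) * Real.sqrt (p i * (1 - p i)) = p i * (1 - p i) := by
    intro i
    exact Real.mul_self_sqrt (mul_nonneg (hp i).1 (by linarith [(hp i).2]))
  have hDξ2 : Dξ * Dξ =
      Ds * Ds + Matrix.diagonal (fun i => (δ i - p i) * (1 - 2 * p i)) := by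
    rw [hDξ, hDs, Matrix.diagonal_mul_diagonal, Matrix.diagonal_mul_diagonal,
      Matrix.diagonal_add]
    have : (fun i => (δ i - p i) * (δ i - p i))
        = fun i => Real.sqrt (p i * (1 - p i)) * Real.sqrt (p i * (1 - p i))
          + (δ i - p i) * (1 - 2 * p i) := by
      funext i
      rw [hsq i]
      rcases h01 i with h | h <;> rw [h] <;> ring
    rw [this]
  have key : (Dp * A * Dξ) * (Dp * A * Dξ)ᴴ
      = (Dp * A * Ds) * (Dp * A * Ds)ᴴ + Dp * M * Dp := by
    have hDpH : Dpᴴ = Dp := by simp [hDp]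
    have hDξH : Dξᴴ = Dξ := by simp [hDξ]
    have hDsH : Dsᴴ = Ds := by simp [hDs]
    simp only [Matrix.conjTranspose_mul, hDpH, hDξH, hDsH, hAH, hM]
    rw [show Dp * A * Dξ * (Dξ * (A * Dp)) = Dp * A * (Dξ * Dξ) * (A * Dp) by
      simp only [Matrix.mul_assoc]]
    rw [hDξ2, Matrix.mul_add, Matrix.add_mul]
    simp only [Matrix.mul_assoc]
  -- norm of Dp at most 1
  have hDpnorm : ‖f Dp‖ ≤ 1 := by
    refine ContinuousLinearMap.opNorm_le_bound _ zero_le_one (fun x => ?_)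
    rw [one_mul]
    have hx : ∀ i, (f Dp x) i = p i * x i := by
      intro i
      have h2 := Matrix.ofLp_toEuclideanCLM (𝕜 := ℝ) Dp x
      have := congrFun h2 i
      exact this.trans (by simp [Matrix.mulVec_diagonal, hDp])
    rw [EuclideanSpace.norm_eq, EuclideanSpace.norm_eq]
    apply Real.sqrt_le_sqrt
    apply Finset.sum_le_sum
    intro i _
    rw [hx i]
    have h1 := (hp i).1; have h2 := (hp i).2
    have : |p i * x i| ≤ |x i| := by
      rw [abs_mul, abs_of_nonneg h1]
      nlinarith [abs_nonneg (x i)]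
    simp only [Real.norm_eq_abs]
    exact pow_le_pow_left₀ (abs_nonneg _) this 2
  have normsq : ∀ B : Matrix (Fin n) (Fin n) ℝ, opNorm B ^ 2 = ‖f (B * Bᴴ)‖ := by
    intro B
    have h1 := CStarRing.norm_self_mul_star (x := f B)
    rw [_root_.map_mul, ← Matrix.star_eq_conjTranspose, map_star, h1, opNorm, sq]
  rw [normsq, normsq, key]
  calc ‖f ((Dp * A * Ds) * (Dp * A * Ds)ᴴ + Dp * M * Dp)‖
      ≤ ‖f ((Dp * A * Ds) * (Dp * A * Ds)ᴴ)‖ + ‖f (Dp * M * Dp)‖ := by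
        rw [map_add]; exact norm_add_le _ _
    _ ≤ ‖f ((Dp * A * Ds) * (Dp * A * Ds)ᴴ)‖ + opNorm M := by
        gcongr
        rw [_root_.map_mul, _root_.map_mul]
        calc ‖f Dp * f M * f Dp‖ ≤ ‖f Dp * f M‖ * ‖f Dp‖ := norm_mul_le _ _
          _ ≤ ‖f Dp‖ * ‖f M‖ * ‖f Dp‖ := by gcongr; exact norm_mul_le _ _
          _ ≤ 1 * ‖f M‖ * 1 := by
              nlinarith [norm_nonneg (f M), norm_nonneg (f Dp), hDpnorm, mul_nonneg (norm_nonneg (f Dp)) (norm_nonneg (f M))]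
          _ = opNorm M := by rw [one_mul, mul_one]; rfl
end
end
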